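/- arXiv:1811.00169 — 12 statements merged into one kernel-verified Lean document; each statement's English description precedes it below -/
import Mathlib

section
/- For any x in a Hilbert space H, the sequence of approximations x_n produced by the dual Kaczmarz algorithm with analysis sequence {φ_n} and synthesis sequence {ψ_n} satisfies x_n = Σ_{k=0}^n ⟨x, g_k⟩ ψ_k for all n ≥ 0, where {g_n} is the auxiliary sequence of the pair. -/
open scoped ComplexInnerProductSpace
open Filter Topology Finset

/-- the dual Kaczmarz approximations satisfy
`x_n = ∑_{k=0}^n ⟨x, g_k⟩ ψ_k`. (Paper's `⟨a, b⟩`, linear in the first slot,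
is Mathlib's `⟪b, a⟫`.) -/
theorem dual_kaczmarz_partial_sum
    {H : Type*} [NormedAddCommGroup H] [InnerProductSpace ℂ H] [CompleteSpace H]
    (φ ψ g X : ℕ → H) (x : H)
    (hpair : ∀ n, ⟪ψ n, φ n⟫ = 1)
    (hX0 : X 0 = ⟪φ 0, x⟫ • ψ 0)
    (hX : ∀ n, X (n + 1) = X n + ⟪φ (n + 1), x - X n⟫ • ψ (n + 1))
    (hg0 : g 0 = φ 0)
    (hg : ∀ n, g (n + 1)
        = φ (n + 1) - ∑ k ∈ Finset.range (n + 1), ⟪ψ k, φ (n + 1)⟫ • g k) :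
    ∀ n, X n = ∑ k ∈ Finset.range (n + 1), ⟪g k, x⟫ • ψ k := by
  intro n
  induction n with
  | zero => simp [hX0, hg0]
  | succ n ih =>
    rw [hX, ih, Finset.sum_range_succ _ (n+1)]
    congr 1
    congr 1
    simp [hg, inner_sub_left, inner_sub_right, sum_inner, inner_sum,
      inner_smul_left, inner_smul_right, inner_conj_symm, mul_comm]
end

section
/- If {(φ_n, ψ_n)} is an effective pair, then every x ∈ H admits the reconstruction x = Σ_{k=0}^∞ ⟨x, g_k⟩ ψ_k, where {g_n} is the auxiliary sequence of the pair. -/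
open scoped ComplexInnerProductSpace
open Filter Topology Finset

variable {H : Type*} [NormedAddCommGroup H] [InnerProductSpace ℂ H] [CompleteSpace H]

/-- The sequence of approximations produced by the dual Kaczmarz algorithm with
analysis sequence `φ` and synthesis sequence `ψ`, applied to `x`.
(Paper's `⟨a, b⟩`, linear in the first slot, is Mathlib's `⟪b, a⟫`.) -/
noncomputable def kacz (φ ψ : ℕ → H) (x : H) : ℕ → H
  | 0 => ⟪φ 0, x⟫ • ψ 0
  | n + 1 => kacz φ ψ x n + ⟪φ (n + 1), x - kacz φ ψ x n⟫ • ψ (n + 1)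

/-- `(φ, ψ)` is an effective pair: the dual Kaczmarz approximations converge to `x`
for every `x`. -/
def EffectivePair (φ ψ : ℕ → H) : Prop :=
  ∀ x : H, Filter.Tendsto (kacz φ ψ x) Filter.atTop (nhds x)

/-- if `(φ, ψ)` is an effective pair then every `x` is reconstructed as
`x = ∑_{k=0}^∞ ⟨x, g_k⟩ ψ_k`, where `g` is the auxiliary sequence of the pair. -/
theorem effective_pair_reconstruction
    (φ ψ g : ℕ → H)
    (hpair : ∀ n, ⟪ψ n, φ n⟫ = 1)
    (hg0 : g 0 = φ 0)
    (hg : ∀ n, g (n + 1)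
        = φ (n + 1) - ∑ k ∈ Finset.range (n + 1), ⟪ψ k, φ (n + 1)⟫ • g k)
    (heff : EffectivePair φ ψ) :
    ∀ x : H,
      Filter.Tendsto (fun n => ∑ k ∈ Finset.range (n + 1), ⟪g k, x⟫ • ψ k)
        Filter.atTop (nhds x) := by
  intro x
  have key : ∀ n, kacz φ ψ x n = ∑ k ∈ Finset.range (n + 1), ⟪g k, x⟫ • ψ k := by
    intro n
    induction n with
    | zero => simp [kacz, hg0]
    | succ n ih =>
      have hcoef : ⟪φ (n + 1), x - kacz φ ψ x n⟫ = ⟪g (n + 1), x⟫ := by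
        rw [hg, inner_sub_left, inner_sub_right, ih, inner_sum, sum_inner]
        congr 1
        refine Finset.sum_congr rfl fun k _ => ?_
        rw [inner_smul_left, inner_smul_right, inner_conj_symm, mul_comm]
      rw [show kacz φ ψ x (n + 1)
            = kacz φ ψ x n + ⟪φ (n + 1), x - kacz φ ψ x n⟫ • ψ (n + 1) from rfl,
        hcoef, ih]
      rw [Finset.sum_range_succ (n := n + 1)]
  have := heff x
  rwa [show kacz φ ψ x = fun n => ∑ k ∈ Finset.range (n + 1), ⟪g k, x⟫ • ψ k
    from funext key] at this
end

section
/- Let T be a bounded invertible operator on a Hilbert space H. Then {(φ_n, ψ_n)} is an effective pair if and only if {(Tφ_n, (T⁻¹)*ψ_n)} is an effective pair. -/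
open scoped ComplexInnerProductSpace
open Filter Topology Finset

variable {H : Type*} [NormedAddCommGroup H] [InnerProductSpace ℂ H] [CompleteSpace H]

open ContinuousLinearMap in
lemma adj_adj_symm (E : H ≃L[ℂ] H) (y : H) :
    adjoint (E : H →L[ℂ] H) (adjoint (E.symm : H →L[ℂ] H) y) = y := by
  have h : adjoint (E : H →L[ℂ] H) ∘L adjoint (E.symm : H →L[ℂ] H)
      = adjoint ((E.symm : H →L[ℂ] H) ∘L (E : H →L[ℂ] H)) := by
    rw [adjoint_comp]
  have h2 : (E.symm : H →L[ℂ] H) ∘L (E : H →L[ℂ] H) = ContinuousLinearMap.id ℂ H := by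
    ext z; simp
  have := congrArg (fun f => f y) h
  simpa [h2, adjoint_id] using this

open ContinuousLinearMap in
lemma kacz_conj (E : H ≃L[ℂ] H) (φ ψ : ℕ → H) (x : H) (n : ℕ) :
    kacz (fun n => E (φ n)) (fun n => adjoint (E.symm : H →L[ℂ] H) (ψ n)) x n
      = adjoint (E.symm : H →L[ℂ] H) (kacz φ ψ (adjoint (E : H →L[ℂ] H) x) n) := by
  induction n with
  | zero =>
      simp only [kacz, map_smul]
      congr 1
      rw [adjoint_inner_right]
      rfl
  | succ n ih =>
      simp only [kacz, ih, map_add, map_smul]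
      congr 2
      have : (⟪E (φ (n+1)), x - adjoint (E.symm : H →L[ℂ] H)
          (kacz φ ψ (adjoint (E : H →L[ℂ] H) x) n)⟫ : ℂ)
          = ⟪φ (n+1), adjoint (E : H →L[ℂ] H)
            (x - adjoint (E.symm : H →L[ℂ] H) (kacz φ ψ (adjoint (E : H →L[ℂ] H) x) n))⟫ := by
        rw [adjoint_inner_right]; rfl
      rw [this, map_sub, adj_adj_symm]

open ContinuousLinearMap in
lemma effective_conj (E : H ≃L[ℂ] H) (φ ψ : ℕ → H) (h : EffectivePair φ ψ) :
    EffectivePair (fun n => E (φ n)) (fun n => adjoint (E.symm : H →L[ℂ] H) (ψ n)) := by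
  intro x
  have h1 := h (adjoint (E : H →L[ℂ] H) x)
  have h2 := ((adjoint (E.symm : H →L[ℂ] H)).continuous.tendsto _).comp h1
  have h3 : adjoint (E.symm : H →L[ℂ] H) (adjoint (E : H →L[ℂ] H) x) = x := by
    have := adj_adj_symm E.symm x
    simpa using this
  rw [h3] at h2
  have : (fun n => adjoint (E.symm : H →L[ℂ] H) (kacz φ ψ (adjoint (E : H →L[ℂ] H) x) n))
      = kacz (fun n => E (φ n)) (fun n => adjoint (E.symm : H →L[ℂ] H) (ψ n)) x := by
    funext n; rw [kacz_conj]
  rw [← this]; exact h2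


/-- for invertible `T ∈ B(H)`, `(φ, ψ)` is an effective pair iff
`(Tφ, (T⁻¹)*ψ)` is an effective pair. -/
theorem effective_pair_iff_conjugated
    (φ ψ : ℕ → H) (T : H ≃L[ℂ] H)
    (hφdense : (Submodule.span ℂ (Set.range φ)).topologicalClosure = ⊤)
    (hψdense : (Submodule.span ℂ (Set.range ψ)).topologicalClosure = ⊤)
    (hpair : ∀ n, ⟪ψ n, φ n⟫ = 1) :
    EffectivePair φ ψ ↔
      EffectivePair (fun n => T (φ n))
        (fun n => ContinuousLinearMap.adjoint (T.symm : H →L[ℂ] H) (ψ n)) := by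
  constructor
  · exact effective_conj T φ ψ
  · intro h
    have h2 := effective_conj T.symm _ _ h
    have e1 : (fun n => T.symm (T (φ n))) = φ := by funext n; simp
    have e2 : (fun n => ContinuousLinearMap.adjoint (T.symm.symm : H →L[ℂ] H)
        (ContinuousLinearMap.adjoint (T.symm : H →L[ℂ] H) (ψ n))) = ψ := by
      funext n
      simpa using adj_adj_symm T (ψ n)
    rw [e1, e2] at h2
    exact h2
end

section
/- If T is a bounded invertible operator on H applied to the dual Kaczmarz algorithm: the approximations x_n for x using the pair (Tφ_n, (T⁻¹)*ψ_n) satisfy x_n = (T⁻¹)* y_n for all n, where y_n are the approximations for T*x using the pair (φ_n, ψ_n). -/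
open scoped ComplexInnerProductSpace
open Filter Topology Finset

variable {H : Type*} [NormedAddCommGroup H] [InnerProductSpace ℂ H] [CompleteSpace H]

lemma key_inner (T : H ≃L[ℂ] H) (φ x u : H) :
    ⟪T φ, x - ContinuousLinearMap.adjoint (T.symm : H →L[ℂ] H) u⟫
      = ⟪φ, ContinuousLinearMap.adjoint (T : H →L[ℂ] H) x - u⟫ := by
  rw [inner_sub_right, inner_sub_right, ContinuousLinearMap.adjoint_inner_right,
    ContinuousLinearMap.adjoint_inner_right]
  simp

/-- the dual Kaczmarz approximations of `x` for the pair
`(Tφ, (T⁻¹)*ψ)` satisfy `x_n = (T⁻¹)* y_n`, where `y_n` are the approximations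
of `T* x` for the pair `(φ, ψ)`. -/
theorem kacz_conjugated_eq
    (φ ψ : ℕ → H) (T : H ≃L[ℂ] H) (x : H) :
    ∀ n : ℕ,
      kacz (fun n => T (φ n))
        (fun n => ContinuousLinearMap.adjoint (T.symm : H →L[ℂ] H) (ψ n)) x n
      = ContinuousLinearMap.adjoint (T.symm : H →L[ℂ] H)
          (kacz φ ψ (ContinuousLinearMap.adjoint (T : H →L[ℂ] H) x) n) := by
  intro n
  induction n with
  | zero =>
    simp only [kacz, map_smul, ContinuousLinearMap.adjoint_inner_right,
      ContinuousLinearEquiv.coe_coe]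
  | succ n ih =>
    simp only [kacz, ih, map_add, map_smul]
    congr 2
    have := key_inner T (φ (n+1)) x (kacz φ ψ (ContinuousLinearMap.adjoint (T : H →L[ℂ] H) x) n)
    simpa using this
end

section
/- Let T be a bounded invertible operator on H and {e_n} a linearly dense sequence of unit vectors. Then {e_n} is effective (for the classical Kaczmarz algorithm) if and only if both {(Te_n, (T⁻¹)*e_n)} and {((T⁻¹)*e_n, Te_n)} are effective pairs. -/
open scoped ComplexInnerProductSpace
open Filter Topology Finset

variable {H : Type*} [NormedAddCommGroup H] [InnerProductSpace ℂ H] [CompleteSpace H]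

/-- for invertible `T ∈ B(H)` and a linearly dense sequence of unit
vectors `e`, `e` is effective iff `(Te, (T⁻¹)*e)` is a symmetric effective pair. -/
theorem effective_iff_symmetric_effective_pair
    (e : ℕ → H) (T : H ≃L[ℂ] H)
    (hdense : (Submodule.span ℂ (Set.range e)).topologicalClosure = ⊤)
    (hunit : ∀ n, ‖e n‖ = 1) :
    EffectivePair e e ↔
      (EffectivePair (fun n => T (e n))
          (fun n => ContinuousLinearMap.adjoint (T.symm : H →L[ℂ] H) (e n)) ∧
        EffectivePair
          (fun n => ContinuousLinearMap.adjoint (T.symm : H →L[ℂ] H) (e n))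
          (fun n => T (e n))) := by
  set S := ContinuousLinearMap.adjoint (T.symm : H →L[ℂ] H) with hS
  set T' := ContinuousLinearMap.adjoint (T : H →L[ℂ] H) with hT'
  have hTS : ∀ y : H, T' (S y) = y := by
    intro y
    apply ext_inner_left ℂ
    intro v
    rw [hT', ContinuousLinearMap.adjoint_inner_right, hS,
      ContinuousLinearMap.adjoint_inner_right]
    simp
  have hST : ∀ y : H, S (T' y) = y := by
    intro y
    apply ext_inner_left ℂ
    intro v
    rw [hS, ContinuousLinearMap.adjoint_inner_right, hT',
      ContinuousLinearMap.adjoint_inner_right]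
    simp
  have key1 : ∀ (x : H) (n : ℕ),
      kacz (fun n => T (e n)) (fun n => S (e n)) x n = S (kacz e e (T' x) n) := by
    intro x n
    induction n with
    | zero =>
      simp only [kacz, map_smul, hT', ContinuousLinearMap.adjoint_inner_right,
        ContinuousLinearEquiv.coe_coe]
    | succ n ih =>
      simp only [hS, hT'] at ih
      simp only [kacz, ih, map_add, map_smul, inner_sub_right, hT', hS,
        ContinuousLinearMap.adjoint_inner_right, ContinuousLinearEquiv.coe_coe,
        ContinuousLinearEquiv.symm_apply_apply]
  have key2 : ∀ (x : H) (n : ℕ),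
      kacz (fun n => S (e n)) (fun n => T (e n)) x n = T (kacz e e (T.symm x) n) := by
    intro x n
    induction n with
    | zero =>
      simp only [kacz, map_smul, hS, ContinuousLinearMap.adjoint_inner_left,
        ContinuousLinearEquiv.coe_coe]
    | succ n ih =>
      simp only [hS] at ih
      simp only [kacz, ih, map_add, map_smul, inner_sub_right, hS,
        ContinuousLinearMap.adjoint_inner_left, ContinuousLinearEquiv.coe_coe,
        ContinuousLinearEquiv.symm_apply_apply]
  have eq1 : EffectivePair (fun n => T (e n)) (fun n => S (e n)) ↔ EffectivePair e e := by
    constructor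
    · intro h x
      have h0 := h (S x)
      have hfun : kacz (fun n => T (e n)) (fun n => S (e n)) (S x)
          = fun n => S (kacz e e x n) := by
        funext n; rw [key1, hTS]
      rw [hfun] at h0
      have h3 := (T'.continuous.tendsto (S x)).comp h0
      have hfun2 : (⇑T' ∘ fun n => S (kacz e e x n)) = kacz e e x := by
        funext n; simp [Function.comp, hTS]
      rw [hfun2, hTS] at h3
      exact h3
    · intro h x
      have h0 := (S.continuous.tendsto (T' x)).comp (h (T' x))
      have hfun : (⇑S ∘ kacz e e (T' x))
          = kacz (fun n => T (e n)) (fun n => S (e n)) x := by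
        funext n; simp [Function.comp, key1]
      rw [hfun, hST] at h0
      exact h0
  have eq2 : EffectivePair (fun n => S (e n)) (fun n => T (e n)) ↔ EffectivePair e e := by
    constructor
    · intro h x
      have h0 := h (T x)
      have hfun : kacz (fun n => S (e n)) (fun n => T (e n)) (T x)
          = fun n => T (kacz e e x n) := by
        funext n; rw [key2, T.symm_apply_apply]
      rw [hfun] at h0
      have h3 := (T.symm.continuous.tendsto (T x)).comp h0
      have hfun2 : (⇑T.symm ∘ fun n => T (kacz e e x n)) = kacz e e x := by
        funext n; simp [Function.comp]
      rw [hfun2, T.symm_apply_apply] at h3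
      exact h3
    · intro h x
      have h0 := (T.continuous.tendsto (T.symm x)).comp (h (T.symm x))
      have hfun : (⇑T ∘ kacz e e (T.symm x))
          = kacz (fun n => S (e n)) (fun n => T (e n)) x := by
        funext n; simp [Function.comp, key2]
      rw [hfun, T.apply_symm_apply] at h0
      exact h0
  constructor
  · intro h
    exact ⟨eq1.mpr h, eq2.mpr h⟩
  · rintro ⟨h1, _⟩
    exact eq1.mp h1
end

section
/- Suppose T ∈ B(H) satisfies T g_n = g̃_n for all n, where {g_n}, {g̃_n} are the auxiliary sequences of (φ_n, ψ_n) and (ψ_n, φ_n) respectively, and suppose ⟨φ_n, ψ_k⟩ = ⟨ψ_n, φ_k⟩ for all n, k. Then Tφ_n = ψ_n for all n. -/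
open scoped ComplexInnerProductSpace
open Filter Topology Finset

variable {H : Type*} [NormedAddCommGroup H] [InnerProductSpace ℂ H] [CompleteSpace H]

/-- if `T g_n = g̃_n` and `⟨φ_n, ψ_k⟩ = ⟨ψ_n, φ_k⟩` for all `n, k`,
then `T φ_n = ψ_n`. -/
theorem map_phi_eq_psi_of_map_aux
    (φ ψ g gt : ℕ → H) (T : H →L[ℂ] H)
    (hg0 : g 0 = φ 0)
    (hg : ∀ n, g (n + 1)
        = φ (n + 1) - ∑ k ∈ Finset.range (n + 1), ⟪ψ k, φ (n + 1)⟫ • g k)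
    (hgt0 : gt 0 = ψ 0)
    (hgt : ∀ n, gt (n + 1)
        = ψ (n + 1) - ∑ k ∈ Finset.range (n + 1), ⟪φ k, ψ (n + 1)⟫ • gt k)
    (hT : ∀ n, T (g n) = gt n)
    (hsym : ∀ n k, ⟪ψ k, φ n⟫ = ⟪φ k, ψ n⟫) :
    ∀ n, T (φ n) = ψ n := by
  intro n
  cases n with
  | zero => rw [← hg0, hT, hgt0]
  | succ n =>
    have : φ (n + 1) = g (n + 1) + ∑ k ∈ Finset.range (n + 1), ⟪ψ k, φ (n + 1)⟫ • g k := by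
      rw [hg]; abel
    rw [this, map_add, map_sum, hT, hgt]
    simp only [map_smul, hT]
    simp only [hsym]
    abel
end

section
/- Suppose T ∈ B(H) is positive with Tφ_n = ψ_n for all n, and define e_n = T^{1/2} φ_n. Then the classical Kaczmarz auxiliary sequence {h_n} of {e_n} satisfies h_n = T^{1/2} g_n for all n, where {g_n} is the auxiliary sequence of the pair (φ_n, ψ_n). -/
open scoped ComplexInnerProductSpace
open Filter Topology Finset

variable {H : Type*} [NormedAddCommGroup H] [InnerProductSpace ℂ H] [CompleteSpace H]

/-- if `T` is positive with `Tφ_n = ψ_n`, `R = T^{1/2}` is its positive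
square root, and `e_n = T^{1/2} φ_n`, then the classical Kaczmarz auxiliary
sequence `h` of `e` satisfies `h_n = T^{1/2} g_n`. -/
theorem aux_of_sqrt_eq_sqrt_aux
    (φ ψ g e h : ℕ → H) (T R : H →L[ℂ] H)
    (hTpos : T.IsPositive) (hRpos : R.IsPositive) (hRsq : R ∘L R = T)
    (hTφ : ∀ n, T (φ n) = ψ n)
    (he : ∀ n, e n = R (φ n))
    (hg0 : g 0 = φ 0)
    (hg : ∀ n, g (n + 1)
        = φ (n + 1) - ∑ k ∈ Finset.range (n + 1), ⟪ψ k, φ (n + 1)⟫ • g k)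
    (hh0 : h 0 = e 0)
    (hh : ∀ n, h (n + 1)
        = e (n + 1) - ∑ k ∈ Finset.range (n + 1), ⟪e k, e (n + 1)⟫ • h k) :
    ∀ n, h n = R (g n) := by
  have hRsa : R.adjoint = R := hRpos.isSelfAdjoint
  have key : ∀ k m, ⟪e k, e m⟫ = ⟪ψ k, φ m⟫ := by
    intro k m
    rw [he, he, ← hTφ, ← hRsq]
    calc ⟪R (φ k), R (φ m)⟫ = ⟪R.adjoint (R (φ k)), φ m⟫ := by
          rw [ContinuousLinearMap.adjoint_inner_left]
      _ = ⟪(R ∘L R) (φ k), φ m⟫ := by rw [hRsa]; rfl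
  intro n
  induction n using Nat.strong_induction_on with
  | _ n ih =>
    match n with
    | 0 => rw [hh0, hg0, he]
    | n + 1 =>
      rw [hh n, hg n, map_sub, map_sum, he]
      congr 1
      refine Finset.sum_congr rfl fun k hk => ?_
      rw [ih k (Finset.mem_range.mp hk), ← he (n + 1), key,
        ContinuousLinearMap.map_smul]
end

section
/- If T ∈ B(H) is positive and invertible with Tφ_n = ψ_n for all n, then T g_n = g̃_n for all n, where {g_n} and {g̃_n} are the auxiliary sequences of (φ_n, ψ_n) and (ψ_n, φ_n) respectively. -/
open scoped ComplexInnerProductSpace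
open Filter Topology Finset

variable {H : Type*} [NormedAddCommGroup H] [InnerProductSpace ℂ H] [CompleteSpace H]

/-- if `T` is positive and invertible with `Tφ_n = ψ_n`, then
`T g_n = g̃_n` for all `n`. -/
theorem map_aux_of_map_phi
    (φ ψ g gt : ℕ → H) (T : H ≃L[ℂ] H)
    (hTpos : (T : H →L[ℂ] H).IsPositive)
    (hTφ : ∀ n, T (φ n) = ψ n)
    (hg0 : g 0 = φ 0)
    (hg : ∀ n, g (n + 1)
        = φ (n + 1) - ∑ k ∈ Finset.range (n + 1), ⟪ψ k, φ (n + 1)⟫ • g k)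
    (hgt0 : gt 0 = ψ 0)
    (hgt : ∀ n, gt (n + 1)
        = ψ (n + 1) - ∑ k ∈ Finset.range (n + 1), ⟪φ k, ψ (n + 1)⟫ • gt k) :
    ∀ n, T (g n) = gt n := by
  have hsym : ∀ k n, ⟪ψ k, φ n⟫ = ⟪φ k, ψ n⟫ := by
    intro k n
    rw [← hTφ k, ← hTφ n]
    exact hTpos.isSelfAdjoint.isSymmetric (φ k) (φ n)
  intro n
  induction n using Nat.strong_induction_on with
  | _ n ih =>
    match n with
    | 0 => rw [hg0, hgt0, hTφ]
    | n + 1 =>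
      rw [hg n, hgt n, map_sub, hTφ, map_sum]
      congr 1
      refine Finset.sum_congr rfl fun k hk => ?_
      rw [map_smul, ih k (Finset.mem_range.mp hk),
        hsym]
end

section
/- Suppose {φ_n}, {ψ_n} are linearly dense in H with ⟨φ_n, ψ_n⟩ = 1, there exists a positive invertible T ∈ B(H) with Tφ_n = ψ_n, and the auxiliary sequences {g_n} and {g̃_n} are canonical dual frames. Then {(φ_n, ψ_n)} and {(ψ_n, φ_n)} are both effective pairs. -/
set_option linter.unusedSectionVars false

open scoped ComplexInnerProductSpace
open Filter Topology Finset

variable {H : Type*} [NormedAddCommGroup H] [InnerProductSpace ℂ H] [CompleteSpace H]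

/-- `f` is a frame with bounds `0 < A ≤ B`. -/
def IsFrame (f : ℕ → H) : Prop :=
  ∃ A B : ℝ, 0 < A ∧ A ≤ B ∧
    ∀ x : H, A * ‖x‖ ^ 2 ≤ ∑' n, ‖⟪f n, x⟫‖ ^ 2 ∧ ∑' n, ‖⟪f n, x⟫‖ ^ 2 ≤ B * ‖x‖ ^ 2

section Aux

private lemma kacz_succ (φ ψ : ℕ → H) (x : H) (n : ℕ) :
    kacz φ ψ x (n + 1) = kacz φ ψ x n + ⟪φ (n + 1), x - kacz φ ψ x n⟫ • ψ (n + 1) := rfl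

private lemma dk_coeff (φ ψ g : ℕ → H)
    (hg : ∀ n, g (n + 1)
        = φ (n + 1) - ∑ k ∈ Finset.range (n + 1), ⟪ψ k, φ (n + 1)⟫ • g k)
    (x : H) (n : ℕ) :
    ⟪φ (n + 1), x - ∑ k ∈ Finset.range (n + 1), ⟪g k, x⟫ • ψ k⟫ = ⟪g (n + 1), x⟫ := by
  rw [hg n, inner_sub_left, inner_sub_right, sum_inner, inner_sum]
  congr 1
  refine Finset.sum_congr rfl fun k _ => ?_
  rw [inner_smul_left, inner_smul_right, ← inner_conj_symm (φ (n + 1)) (ψ k)]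
  ring

private lemma kacz_eq_sum (φ ψ g : ℕ → H)
    (hg0 : g 0 = φ 0)
    (hg : ∀ n, g (n + 1)
        = φ (n + 1) - ∑ k ∈ Finset.range (n + 1), ⟪ψ k, φ (n + 1)⟫ • g k)
    (x : H) : ∀ n, kacz φ ψ x n = ∑ k ∈ Finset.range (n + 1), ⟪g k, x⟫ • ψ k := by
  intro n
  induction n with
  | zero => simp [kacz, hg0]
  | succ n ih =>
      rw [kacz_succ, ih, dk_coeff φ ψ g hg x n]
      simp [Finset.sum_range_succ]

private lemma cs_aux (P : H →L[ℂ] H)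
    (hsymm : ∀ a b : H, ⟪P a, b⟫ = ⟪a, P b⟫)
    (hpos : ∀ y : H, 0 ≤ Complex.re ⟪y, P y⟫) (a b : H) :
    (Complex.re ⟪a, P b⟫) ^ 2 ≤ Complex.re ⟪a, P a⟫ * Complex.re ⟪b, P b⟫ := by
  set r := Complex.re ⟪a, P b⟫ with hr
  have hba : ⟪b, P a⟫ = (starRingEnd ℂ) ⟪a, P b⟫ := by
    rw [← hsymm a b]; exact (inner_conj_symm b (P a)).symm
  have expand : ∀ t : ℝ,
      0 ≤ Complex.re ⟪a, P a⟫ + 2 * t * r + t ^ 2 * Complex.re ⟪b, P b⟫ := by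
    intro t
    have h := hpos (a + (t : ℂ) • b)
    have e : ⟪a + (t : ℂ) • b, P (a + (t : ℂ) • b)⟫
        = ⟪a, P a⟫ + (t : ℂ) * ⟪a, P b⟫ + (t : ℂ) * ⟪b, P a⟫
          + ((t ^ 2 : ℝ) : ℂ) * ⟪b, P b⟫ := by
      simp only [map_add, map_smul, inner_add_left, inner_add_right,
        inner_smul_left, inner_smul_right, Complex.conj_ofReal]
      push_cast
      ring
    rw [e, hba] at h
    simp only [Complex.add_re, Complex.mul_re, Complex.ofReal_re, Complex.ofReal_im,
      Complex.conj_re, zero_mul, sub_zero] at h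
    linarith
  have hNb := hpos b
  rcases hNb.eq_or_lt with h0 | hlt
  · have hr0 : r = 0 := by
      by_contra hrne
      have h1 := expand (-(Complex.re ⟪a, P a⟫ + 1) / (2 * r))
      rw [← h0] at h1
      have e2 : 2 * (-(Complex.re ⟪a, P a⟫ + 1) / (2 * r)) * r
          = -(Complex.re ⟪a, P a⟫ + 1) := by
        field_simp
      rw [e2] at h1
      nlinarith [h1]
    rw [hr0, ← h0]
    simp
  · have h1 := expand (-(r / Complex.re ⟪b, P b⟫))
    have hne : Complex.re ⟪b, P b⟫ ≠ 0 := ne_of_gt hlt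
    have e2 : Complex.re ⟪a, P a⟫ + 2 * (-(r / Complex.re ⟪b, P b⟫)) * r
        + (-(r / Complex.re ⟪b, P b⟫)) ^ 2 * Complex.re ⟪b, P b⟫
        = Complex.re ⟪a, P a⟫ - r ^ 2 / Complex.re ⟪b, P b⟫ := by
      field_simp
      ring
    rw [e2] at h1
    have h2 : r ^ 2 / Complex.re ⟪b, P b⟫ ≤ Complex.re ⟪a, P a⟫ := by linarith
    exact (div_le_iff₀ hlt).mp h2

private lemma norm_sq_le_aux (P : H ≃L[ℂ] H)
    (hsymm : ∀ a b : H, ⟪P a, b⟫ = ⟪a, P b⟫)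
    (hpos : ∀ y : H, 0 ≤ Complex.re ⟪y, P y⟫) (y : H) :
    ‖y‖ ^ 2 ≤ ‖(P.symm : H →L[ℂ] H)‖ ^ 2 * ‖(P : H →L[ℂ] H)‖ * Complex.re ⟪y, P y⟫ := by
  set u := P y with hu
  have hcs := cs_aux (P : H →L[ℂ] H) hsymm hpos u y
  simp only [ContinuousLinearEquiv.coe_coe] at hcs
  have huu : Complex.re ⟪u, P y⟫ = ‖u‖ ^ 2 := by
    rw [show P y = u from rfl, ← inner_self_eq_norm_sq (𝕜 := ℂ)]
    rfl
  have hNu : Complex.re ⟪u, P u⟫ ≤ ‖(P : H →L[ℂ] H)‖ * ‖u‖ ^ 2 := by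
    have h1 : Complex.re ⟪u, P u⟫ ≤ ‖⟪u, P u⟫‖ := Complex.re_le_norm _
    have h2 : ‖⟪u, P u⟫‖ ≤ ‖u‖ * ‖P u‖ := norm_inner_le_norm _ _
    have h3 : ‖P u‖ ≤ ‖(P : H →L[ℂ] H)‖ * ‖u‖ := by
      have := (P : H →L[ℂ] H).le_opNorm u
      simpa using this
    nlinarith [norm_nonneg u]
  have hNy := hpos y
  have hPn : (0:ℝ) ≤ ‖(P : H →L[ℂ] H)‖ := norm_nonneg _
  have key : ‖u‖ ^ 2 ≤ ‖(P : H →L[ℂ] H)‖ * Complex.re ⟪y, P y⟫ := by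
    by_cases hu0 : ‖u‖ = 0
    · rw [hu0]
      norm_num
      exact mul_nonneg hPn hNy
    · have hu2 : 0 < ‖u‖ ^ 2 := by positivity
      have h5 : ‖u‖ ^ 2 * ‖u‖ ^ 2
          ≤ (‖(P : H →L[ℂ] H)‖ * Complex.re ⟪y, P y⟫) * ‖u‖ ^ 2 := by
        nlinarith [hcs, huu, mul_le_mul_of_nonneg_right hNu hNy]
      exact le_of_mul_le_mul_right h5 hu2
  have hy : ‖y‖ ≤ ‖(P.symm : H →L[ℂ] H)‖ * ‖u‖ := by
    have hy' : y = P.symm u := by rw [hu, ContinuousLinearEquiv.symm_apply_apply]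
    calc ‖y‖ = ‖(P.symm : H →L[ℂ] H) u‖ := by
          rw [ContinuousLinearEquiv.coe_coe, ← hy']
    _ ≤ ‖(P.symm : H →L[ℂ] H)‖ * ‖u‖ := (P.symm : H →L[ℂ] H).le_opNorm u
  have hPsn : (0:ℝ) ≤ ‖(P.symm : H →L[ℂ] H)‖ := norm_nonneg _
  nlinarith [hy, key, norm_nonneg y, norm_nonneg u]

private lemma effective_aux (φ ψ g : ℕ → H) (P : H ≃L[ℂ] H)
    (hsymm : ∀ a b : H, ⟪P a, b⟫ = ⟪a, P b⟫)
    (hpos : ∀ y : H, 0 ≤ Complex.re ⟪y, P y⟫)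
    (hPψ : ∀ n, P (ψ n) = φ n)
    (hpair : ∀ n, ⟪ψ n, φ n⟫ = 1)
    (hg0 : g 0 = φ 0)
    (hg : ∀ n, g (n + 1)
        = φ (n + 1) - ∑ k ∈ Finset.range (n + 1), ⟪ψ k, φ (n + 1)⟫ • g k)
    (hsum : ∀ x : H, HasSum (fun n => ⟪g n, x⟫ • g n) (P x)) :
    EffectivePair φ ψ := by
  intro x
  have step : ∀ (z : H) (k : ℕ),
      Complex.re ⟪z - ⟪φ k, z⟫ • ψ k, P (z - ⟪φ k, z⟫ • ψ k)⟫
        = Complex.re ⟪z, P z⟫ - ‖⟪φ k, z⟫‖ ^ 2 := by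
    intro z k
    have h1 : ⟪z, P (ψ k)⟫ = (starRingEnd ℂ) ⟪φ k, z⟫ := by
      rw [hPψ k, ← inner_conj_symm]
    have h2 : ⟪ψ k, P z⟫ = ⟪φ k, z⟫ := by rw [← hsymm, hPψ k]
    have h3 : ⟪ψ k, P (ψ k)⟫ = 1 := by rw [hPψ k]; exact hpair k
    have expand : ⟪z - ⟪φ k, z⟫ • ψ k, P (z - ⟪φ k, z⟫ • ψ k)⟫
        = ⟪z, P z⟫ - ⟪φ k, z⟫ * (starRingEnd ℂ) ⟪φ k, z⟫ := by
      simp only [map_sub, map_smul, inner_sub_left, inner_sub_right,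
        inner_smul_left, inner_smul_right, h1, h2, h3, mul_one]
      ring
    rw [expand, Complex.sub_re, Complex.mul_conj]
    simp only [Complex.ofReal_re, Complex.normSq_eq_norm_sq]
  have hcoeff : ∀ n, ⟪φ (n + 1), x - kacz φ ψ x n⟫ = ⟪g (n + 1), x⟫ := by
    intro n
    rw [kacz_eq_sum φ ψ g hg0 hg x n]
    exact dk_coeff φ ψ g hg x n
  have tele : ∀ n, Complex.re ⟪x - kacz φ ψ x n, P (x - kacz φ ψ x n)⟫
      = Complex.re ⟪x, P x⟫ - ∑ k ∈ Finset.range (n + 1), ‖⟪g k, x⟫‖ ^ 2 := by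
    intro n
    induction n with
    | zero =>
        have e : x - kacz φ ψ x 0 = x - ⟪φ 0, x⟫ • ψ 0 := rfl
        rw [e, step x 0]
        simp [hg0]
    | succ n ih =>
        have e : x - kacz φ ψ x (n + 1)
            = (x - kacz φ ψ x n) - ⟪φ (n + 1), x - kacz φ ψ x n⟫ • ψ (n + 1) := by
          rw [kacz_succ]; abel
        rw [e, step, ih, hcoeff n,
          show (∑ k ∈ Finset.range (n + 1 + 1), ‖⟪g k, x⟫‖ ^ 2)
              = ∑ k ∈ Finset.range (n + 1), ‖⟪g k, x⟫‖ ^ 2 + ‖⟪g (n + 1), x⟫‖ ^ 2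
            from Finset.sum_range_succ _ _]
        ring
  have hsq : HasSum (fun n => ‖⟪g n, x⟫‖ ^ 2) (Complex.re ⟪x, P x⟫) := by
    have h := (hsum x).mapL (Complex.reCLM.comp ((innerSL ℂ x).restrictScalars ℝ))
    have e : (fun n => (Complex.reCLM.comp ((innerSL ℂ x).restrictScalars ℝ))
        (⟪g n, x⟫ • g n)) = fun n => ‖⟪g n, x⟫‖ ^ 2 := by
      funext n
      simp only [ContinuousLinearMap.coe_comp', Function.comp_apply,
        ContinuousLinearMap.coe_restrictScalars', innerSL_apply_apply, Complex.reCLM_apply,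
        inner_smul_right]
      rw [← inner_conj_symm x (g n), Complex.mul_conj]
      simp only [Complex.ofReal_re, Complex.normSq_eq_norm_sq]
    rw [e] at h
    have e2 : (Complex.reCLM.comp ((innerSL ℂ x).restrictScalars ℝ)) (P x)
        = Complex.re ⟪x, P x⟫ := by simp
    rwa [e2] at h
  have hpartial : Tendsto (fun n => ∑ k ∈ Finset.range (n + 1), ‖⟪g k, x⟫‖ ^ 2)
      atTop (𝓝 (Complex.re ⟪x, P x⟫)) :=
    hsq.tendsto_sum_nat.comp (tendsto_add_atTop_nat 1)
  have hNto0 : Tendsto (fun n => Complex.re ⟪x - kacz φ ψ x n, P (x - kacz φ ψ x n)⟫)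
      atTop (𝓝 0) := by
    have e : (fun n => Complex.re ⟪x - kacz φ ψ x n, P (x - kacz φ ψ x n)⟫)
        = fun n => Complex.re ⟪x, P x⟫
            - ∑ k ∈ Finset.range (n + 1), ‖⟪g k, x⟫‖ ^ 2 := funext tele
    rw [e]
    have h := hpartial.const_sub (Complex.re ⟪x, P x⟫)
    simpa using h
  have hb : ∀ n, ‖x - kacz φ ψ x n‖ ^ 2
      ≤ ‖(P.symm : H →L[ℂ] H)‖ ^ 2 * ‖(P : H →L[ℂ] H)‖
        * Complex.re ⟪x - kacz φ ψ x n, P (x - kacz φ ψ x n)⟫ :=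
    fun n => norm_sq_le_aux P hsymm hpos _
  have h2 : Tendsto (fun n => ‖x - kacz φ ψ x n‖ ^ 2) atTop (𝓝 0) := by
    have hM := hNto0.const_mul (‖(P.symm : H →L[ℂ] H)‖ ^ 2 * ‖(P : H →L[ℂ] H)‖)
    rw [mul_zero] at hM
    exact squeeze_zero (fun n => sq_nonneg _) hb hM
  have h3 : Tendsto (fun n => ‖x - kacz φ ψ x n‖) atTop (𝓝 0) := by
    have h4 := (Real.continuous_sqrt.tendsto 0).comp h2
    simpa [Function.comp_def, Real.sqrt_sq_eq_abs, abs_norm] using h4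
  exact tendsto_iff_norm_sub_tendsto_zero.mpr (by simpa [norm_sub_rev] using h3)

end Aux

/-- if `⟨φ_n, ψ_n⟩ = 1`, there is a positive invertible `T` with
`Tφ_n = ψ_n`, and the auxiliary sequences `g, g̃` are canonical dual frames
(`g̃_n = S⁻¹ g_n` with `S` the frame operator of `g`), then both `(φ, ψ)` and
`(ψ, φ)` are effective pairs. -/
theorem symmetric_effective_pair_of_canonical_dual_aux
    (φ ψ g gt : ℕ → H) (T : H ≃L[ℂ] H) (S : H ≃L[ℂ] H)
    (hφdense : (Submodule.span ℂ (Set.range φ)).topologicalClosure = ⊤)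
    (hψdense : (Submodule.span ℂ (Set.range ψ)).topologicalClosure = ⊤)
    (hpair : ∀ n, ⟪ψ n, φ n⟫ = 1)
    (hTpos : (T : H →L[ℂ] H).IsPositive)
    (hTφ : ∀ n, T (φ n) = ψ n)
    (hg0 : g 0 = φ 0)
    (hg : ∀ n, g (n + 1)
        = φ (n + 1) - ∑ k ∈ Finset.range (n + 1), ⟪ψ k, φ (n + 1)⟫ • g k)
    (hgt0 : gt 0 = ψ 0)
    (hgt : ∀ n, gt (n + 1)
        = ψ (n + 1) - ∑ k ∈ Finset.range (n + 1), ⟪φ k, ψ (n + 1)⟫ • gt k)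
    (hgframe : IsFrame g)
    (hSframeOp : ∀ x : H, HasSum (fun n => ⟪g n, x⟫ • g n) (S x))
    (hcanonical : ∀ n, gt n = S.symm (g n)) :
    EffectivePair φ ψ ∧ EffectivePair ψ φ := by
  have hTsym : ∀ a b : H, ⟪T a, b⟫ = ⟪a, T b⟫ := fun a b => hTpos.1 a b
  have hTsymInv : ∀ a b : H, ⟪T.symm a, b⟫ = ⟪a, T.symm b⟫ := by
    intro a b
    have h1 : ⟪T.symm a, b⟫ = ⟪T.symm a, T (T.symm b)⟫ := by
      rw [T.apply_symm_apply]
    rw [h1, ← hTsym, T.apply_symm_apply]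
  have hposT : ∀ y : H, 0 ≤ Complex.re ⟪y, T y⟫ := by
    intro y
    have h := hTpos.2 y
    rw [ContinuousLinearMap.reApplyInnerSelf_apply] at h
    have h2 : ⟪y, T y⟫ = (starRingEnd ℂ) ⟪(T : H →L[ℂ] H) y, y⟫ :=
      (inner_conj_symm _ _).symm
    rw [h2, Complex.conj_re]
    exact h
  have hposInv : ∀ y : H, 0 ≤ Complex.re ⟪y, T.symm y⟫ := by
    intro y
    have h := hposT (T.symm y)
    rw [T.apply_symm_apply] at h
    have h2 : ⟪y, T.symm y⟫ = (starRingEnd ℂ) ⟪T.symm y, y⟫ :=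
      (inner_conj_symm _ _).symm
    rw [h2, Complex.conj_re]
    exact h
  have hgtT : ∀ n, gt n = T (g n) := by
    have key : ∀ n, ∀ k ≤ n, gt k = T (g k) := by
      intro n
      induction n with
      | zero =>
          intro k hk
          interval_cases k
          rw [hgt0, hg0, hTφ]
      | succ n ih =>
          intro k hk
          rcases eq_or_lt_of_le hk with rfl | hlt
          · rw [hgt n, hg n, map_sub, map_sum, hTφ]
            congr 1
            refine Finset.sum_congr rfl fun j hj => ?_
            have hj' : j ≤ n := Nat.lt_succ_iff.mp (Finset.mem_range.mp hj)
            rw [ih j hj', map_smul]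
            congr 1
            conv_rhs => rw [← hTφ j]
            rw [hTsym, hTφ]
          · exact ih k (Nat.lt_succ_iff.mp hlt)
    exact fun n => key n n le_rfl
  have hgspanφ : ∀ n, g n ∈ Submodule.span ℂ (Set.range φ) := by
    have key : ∀ n, ∀ k ≤ n, g k ∈ Submodule.span ℂ (Set.range φ) := by
      intro n
      induction n with
      | zero =>
          intro k hk
          interval_cases k
          rw [hg0]; exact Submodule.subset_span ⟨0, rfl⟩
      | succ n ih =>
          intro k hk
          rcases eq_or_lt_of_le hk with rfl | hlt
          · rw [hg n]
            refine sub_mem (Submodule.subset_span ⟨n + 1, rfl⟩)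
              (Submodule.sum_mem _ fun j hj => Submodule.smul_mem _ _ ?_)
            exact ih j (Nat.lt_succ_iff.mp (Finset.mem_range.mp hj))
          · exact ih k (Nat.lt_succ_iff.mp hlt)
    exact fun n => key n n le_rfl
  have hφspang : ∀ n, φ n ∈ Submodule.span ℂ (Set.range g) := by
    intro n
    match n with
    | 0 =>
        rw [← hg0]; exact Submodule.subset_span ⟨0, rfl⟩
    | m + 1 =>
        have e : φ (m + 1) = g (m + 1) + ∑ k ∈ Finset.range (m + 1), ⟪ψ k, φ (m + 1)⟫ • g k := by
          rw [hg m]; abel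
        rw [e]
        exact add_mem (Submodule.subset_span ⟨m + 1, rfl⟩)
          (Submodule.sum_mem _ fun k _ => Submodule.smul_mem _ _ (Submodule.subset_span ⟨k, rfl⟩))
  have hspan : Submodule.span ℂ (Set.range g) = Submodule.span ℂ (Set.range φ) := by
    apply le_antisymm
    · rw [Submodule.span_le]; rintro _ ⟨n, rfl⟩; exact hgspanφ n
    · rw [Submodule.span_le]; rintro _ ⟨n, rfl⟩; exact hφspang n
  have hdense : Dense ((Submodule.span ℂ (Set.range g) : Submodule ℂ H) : Set H) := by
    rw [hspan]
    exact Submodule.dense_iff_topologicalClosure_eq_top.mpr hφdense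
  have hST : ∀ x : H, S (T x) = x := by
    have heq : (S : H →L[ℂ] H).comp (T : H →L[ℂ] H) = ContinuousLinearMap.id ℂ H := by
      refine ContinuousLinearMap.ext_on hdense ?_
      rintro _ ⟨n, rfl⟩
      simp only [ContinuousLinearMap.coe_comp', Function.comp_apply,
        ContinuousLinearMap.id_apply, ContinuousLinearEquiv.coe_coe]
      rw [← hgtT n, hcanonical n, ContinuousLinearEquiv.apply_symm_apply]
    intro x
    have h := ContinuousLinearMap.ext_iff.mp heq x
    simpa using h
  have hS : ∀ x : H, S x = T.symm x := by
    intro x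
    conv_lhs => rw [← T.apply_symm_apply x]
    rw [hST]
  have hsum1 : ∀ x : H, HasSum (fun n => ⟪g n, x⟫ • g n) (T.symm x) := by
    intro x; rw [← hS x]; exact hSframeOp x
  have hsum2 : ∀ x : H, HasSum (fun n => ⟪gt n, x⟫ • gt n) (T x) := by
    intro x
    have h := (hsum1 (T x)).mapL (T : H →L[ℂ] H)
    have e : (fun n => (T : H →L[ℂ] H) (⟪g n, T x⟫ • g n))
        = fun n => ⟪gt n, x⟫ • gt n := by
      funext n
      rw [map_smul, hgtT n]
      rw [hTsym]
      rfl
    rw [e] at h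
    have e2 : (T : H →L[ℂ] H) (T.symm (T x)) = T x := by simp
    rwa [e2] at h
  constructor
  · exact effective_aux φ ψ g T.symm hTsymInv hposInv
      (fun n => by rw [← hTφ n, T.symm_apply_apply]) hpair hg0 hg hsum1
  · refine effective_aux ψ φ gt T hTsym hposT hTφ (fun n => ?_) hgt0 hgt hsum2
    rw [← inner_conj_symm, hpair n, map_one]
end

section
/- Let {φ_n} and {ψ_n} be linearly dense sequences in a finite-dimensional Hilbert space H_N. If the mixed Grammian matrix G_{m,n} = ⟨ψ_m, φ_n⟩ is positive semidefinite, then there exists a positive invertible operator T on H_N such that Tφ_n = ψ_n for all n. -/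
open scoped ComplexInnerProductSpace ComplexOrder
open Filter Topology Finset

variable {H : Type*} [NormedAddCommGroup H] [InnerProductSpace ℂ H] [CompleteSpace H]

/-- Positivity of quadratic form in Finsupp form. -/
lemma key_nonneg {H : Type*} [NormedAddCommGroup H] [InnerProductSpace ℂ H] (φ ψ : ℕ → H)
    (hpos : ∀ (N : ℕ) (c : ℕ → ℂ),
      0 ≤ ∑ k ∈ Finset.range N, ∑ j ∈ Finset.range N,
          (starRingEnd ℂ) (c k) * ⟪φ j, ψ k⟫ * c j) (a : ℕ →₀ ℂ) :
    0 ≤ ⟪Finsupp.linearCombination ℂ φ a, Finsupp.linearCombination ℂ ψ a⟫ := by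
  classical
  obtain ⟨N, hN⟩ : ∃ N, a.support ⊆ Finset.range N := by
    rcases a.support.eq_empty_or_nonempty with h | h
    · exact ⟨0, by simp [h]⟩
    · exact ⟨a.support.max' h + 1, fun x hx => Finset.mem_range.2
        (Nat.lt_succ_of_le (a.support.le_max' x hx))⟩
  have hPa : Finsupp.linearCombination ℂ φ a = ∑ j ∈ Finset.range N, a j • φ j :=
    Finsupp.linearCombination_apply_of_mem_supported ℂ (by exact hN)
  have hΨa : Finsupp.linearCombination ℂ ψ a = ∑ j ∈ Finset.range N, a j • ψ j :=
    Finsupp.linearCombination_apply_of_mem_supported ℂ (by exact hN)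
  rw [hPa, hΨa, sum_inner]
  have := hpos N (fun n => (starRingEnd ℂ) (a n))
  rw [Finset.sum_comm] at this
  convert this using 2 with j _
  rw [inner_sum]
  refine Finset.sum_congr rfl fun k _ => ?_
  rw [inner_smul_left, inner_smul_right]
  simp only [RingHom.id_apply, starRingEnd_self_apply]
  ring

lemma key_ker {H : Type*} [NormedAddCommGroup H] [InnerProductSpace ℂ H] (φ ψ : ℕ → H)
    (hφspan : Submodule.span ℂ (Set.range φ) = ⊤)
    (hQ : ∀ a : ℕ →₀ ℂ,
      0 ≤ ⟪Finsupp.linearCombination ℂ φ a, Finsupp.linearCombination ℂ ψ a⟫)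
    (a : ℕ →₀ ℂ) (ha : Finsupp.linearCombination ℂ φ a = 0) :
    Finsupp.linearCombination ℂ ψ a = 0 := by
  classical
  set P := Finsupp.linearCombination ℂ φ
  set Ψ := Finsupp.linearCombination ℂ ψ
  have hPsurj : Function.Surjective P := by
    rw [← LinearMap.range_eq_top, Finsupp.range_linearCombination, hφspan]
  rw [← inner_self_eq_zero (𝕜 := ℂ)]
  suffices h : ∀ x : H, ⟪x, Ψ a⟫ = 0 by exact h _
  intro x
  obtain ⟨b, rfl⟩ := hPsurj x
  set z : ℂ := ⟪P b, Ψ a⟫ with hz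
  by_contra hzne
  -- w = ⟪P b, Ψ b⟫ is nonneg real
  have hw := hQ b
  set w : ℂ := ⟪P b, Ψ b⟫ with hwdef
  have hwre : 0 ≤ w.re := (Complex.le_def.mp hw).1
  -- for each s > 0, consider a + t • b with t = -s * z / ‖z‖
  have main : ∀ s : ℝ, 0 < s → ‖z‖ ≤ s * w.re := by
    intro s hs
    set u : ℂ := z / ‖z‖ with hu
    have hzn : (‖z‖ : ℂ) ≠ 0 := by
      simpa using norm_ne_zero_iff.mpr hzne
    have huu : (starRingEnd ℂ) u * z = ‖z‖ := by
      rw [hu, map_div₀]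
      rw [div_mul_eq_mul_div, mul_comm, Complex.mul_conj']
      · simp [Complex.sq_norm, Complex.normSq_eq_norm_sq, mul_one]
        rw [pow_two, mul_div_assoc, div_self hzn]
        exact mul_one _
    have hnu : ‖u‖ = 1 := by
      rw [hu, norm_div, Complex.norm_real, norm_norm, div_self (norm_ne_zero_iff.mpr hzne)]
    set t : ℂ := -(s : ℂ) * u with ht
    have := hQ (a + t • b)
    have huu2 : (starRingEnd ℂ) u * u = 1 := by
      have h' : (starRingEnd ℂ) u * u = ((starRingEnd ℂ) u * z) / ‖z‖ := by
        rw [hu]; ring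
      rw [h', huu, div_self hzn]
    have expand : ⟪P (a + t • b), Ψ (a + t • b)⟫
        = (starRingEnd ℂ) t * z + (starRingEnd ℂ) t * t * w := by
      simp only [map_add, map_smul, ha, zero_add, inner_add_right,
        inner_smul_left, inner_smul_right, ← hz, ← hwdef]
      ring
    rw [expand] at this
    have h1 : (starRingEnd ℂ) t * z = -(s : ℂ) * ‖z‖ := by
      rw [ht, map_mul, mul_assoc, huu, map_neg, Complex.conj_ofReal]
    have h2 : (starRingEnd ℂ) t * t = (s : ℂ) ^ 2 := by
      have h' : (starRingEnd ℂ) t * t = (s : ℂ) ^ 2 * ((starRingEnd ℂ) u * u) := by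
        rw [ht, map_mul, map_neg, Complex.conj_ofReal]; ring
      rw [h', huu2, mul_one]
    rw [h1, h2] at this
    have hre := (Complex.le_def.mp this).1
    have hre' : (-(s : ℂ) * ‖z‖ + (s : ℂ) ^ 2 * w).re = -s * ‖z‖ + s ^ 2 * w.re := by
      simp [Complex.add_re, Complex.mul_re, Complex.ofReal_re, Complex.ofReal_im, pow_two]

    rw [hre'] at hre
    simp only [Complex.zero_re] at hre
    exact le_of_mul_le_mul_left (by nlinarith) hs
  have hzpos : 0 < ‖z‖ := norm_pos_iff.mpr hzne
  have hd : (‖z‖ / (w.re + 1)) * (w.re + 1) = ‖z‖ :=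
    div_mul_cancel₀ _ (by positivity)
  have hle := main (‖z‖ / (w.re + 1)) (by positivity)
  nlinarith [mul_le_mul_of_nonneg_right hle (by positivity : (0:ℝ) ≤ w.re + 1)]


/-- in a finite-dimensional Hilbert space, if every principal
submatrix of the mixed Grammian `G_{m,n} = ⟨ψ_m, φ_n⟩` is positive semidefinite,
then there is a positive invertible operator `T` with `Tφ_n = ψ_n` for all `n`. -/
theorem positive_map_of_grammian_posSemidef
    {H : Type*} [NormedAddCommGroup H] [InnerProductSpace ℂ H]
    [FiniteDimensional ℂ H] (φ ψ : ℕ → H)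
    (hφspan : Submodule.span ℂ (Set.range φ) = ⊤)
    (hψspan : Submodule.span ℂ (Set.range ψ) = ⊤)
    (hpos : ∀ (N : ℕ) (c : ℕ → ℂ),
      0 ≤ ∑ k ∈ Finset.range N, ∑ j ∈ Finset.range N,
          (starRingEnd ℂ) (c k) * ⟪φ j, ψ k⟫ * c j) :
    ∃ T : H ≃L[ℂ] H, (T : H →L[ℂ] H).IsPositive ∧ ∀ n, T (φ n) = ψ n := by
  classical
  set P : (ℕ →₀ ℂ) →ₗ[ℂ] H := Finsupp.linearCombination ℂ φ with hPdef
  set Ψ : (ℕ →₀ ℂ) →ₗ[ℂ] H := Finsupp.linearCombination ℂ ψ with hΨdef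
  have hQ : ∀ a : ℕ →₀ ℂ, 0 ≤ ⟪P a, Ψ a⟫ := key_nonneg φ ψ hpos
  have hker : ∀ a : ℕ →₀ ℂ, P a = 0 → Ψ a = 0 := key_ker φ ψ hφspan hQ
  have hPsurj : Function.Surjective P := by
    rw [← LinearMap.range_eq_top, hPdef, Finsupp.range_linearCombination, hφspan]
  -- choose a basis inside the range of φ
  obtain ⟨sset, hsub, hspan, hli⟩ := exists_linearIndependent ℂ (Set.range φ)
  let b : Module.Basis sset ℂ H := Module.Basis.mk hli (by rw [Subtype.range_coe, hspan, hφspan])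
  have hbv : ∀ v : sset, (b v : H) = (v : H) := fun v => by simp [b, Module.Basis.mk_apply]
  -- index choice
  let idx : sset → ℕ := fun v => (hsub v.2).choose
  have hidx : ∀ v : sset, φ (idx v) = (v : H) := fun v => (hsub v.2).choose_spec
  let T₀ : H →ₗ[ℂ] H := b.constr ℂ (fun v => ψ (idx v))
  have hTφ : ∀ n, T₀ (φ n) = ψ n := by
    intro n
    set c : sset →₀ ℂ := b.repr (φ n) with hc
    set a : ℕ →₀ ℂ := Finsupp.single n 1 - c.mapDomain idx with hadef
    have hcomp : ∀ g : ℕ → H, Finsupp.linearCombination ℂ g (c.mapDomain idx)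
        = c.sum fun v r => r • g (idx v) := by
      intro g
      rw [Finsupp.linearCombination_mapDomain]
      rfl
    have hPa : P a = 0 := by
      rw [hadef, map_sub, hPdef]
      rw [Finsupp.linearCombination_single, one_smul, hcomp φ]
      have : (c.sum fun v r => r • φ (idx v)) = c.sum fun v r => r • (v : H) := by
        refine Finsupp.sum_congr fun v _ => by rw [hidx v]
      rw [this, sub_eq_zero]
      have := b.linearCombination_repr (φ n)
      rw [← this, ← hc, Finsupp.linearCombination_apply]
      exact Finsupp.sum_congr fun v _ => by rw [hbv v]
    have hΨa := hker a hPa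
    rw [hadef, map_sub, hΨdef, Finsupp.linearCombination_single, one_smul,
      hcomp ψ, sub_eq_zero] at hΨa
    rw [hΨa]
    show (b.constr ℂ fun v => ψ (idx v)) (φ n) = _
    rw [Module.Basis.constr_apply, ← hc]
  have hTP : ∀ a : ℕ →₀ ℂ, T₀ (P a) = Ψ a := by
    have : T₀.comp P = Ψ := by
      refine Finsupp.lhom_ext fun n r => ?_
      simp only [LinearMap.comp_apply, hPdef, hΨdef, Finsupp.linearCombination_single,
        map_smul, hTφ n]
    intro a; rw [← this]; rfl
  have hTpos : ∀ x : H, 0 ≤ ⟪x, T₀ x⟫ := by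
    intro x
    obtain ⟨a, rfl⟩ := hPsurj x
    rw [hTP a]; exact hQ a
  have hsurjT : Function.Surjective T₀ := by
    rw [← LinearMap.range_eq_top, ← top_le_iff, ← hψspan, Submodule.span_le]
    rintro _ ⟨n, rfl⟩
    exact ⟨φ n, hTφ n⟩
  have hinjT : Function.Injective T₀ := LinearMap.injective_iff_surjective.mpr hsurjT
  let E : H ≃ₗ[ℂ] H := LinearEquiv.ofBijective T₀ ⟨hinjT, hsurjT⟩
  let T : H ≃L[ℂ] H := E.toContinuousLinearEquiv
  have hTx : ∀ x, T x = T₀ x := fun x => rfl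
  refine ⟨T, ?_, fun n => by rw [hTx, hTφ n]⟩
  rw [ContinuousLinearMap.isPositive_iff_complex]
  intro x
  have hp := hTpos x
  have h1 : (0 : ℂ).re ≤ (⟪x, T₀ x⟫ : ℂ).re := (Complex.le_def.mp hp).1
  have h2 : (0 : ℂ).im = (⟪x, T₀ x⟫ : ℂ).im := (Complex.le_def.mp hp).2
  have hcoe : ((T : H →L[ℂ] H) x : H) = T₀ x := rfl
  have hconj : ⟪(T : H →L[ℂ] H) x, x⟫ = (starRingEnd ℂ) ⟪x, T₀ x⟫ := by
    rw [hcoe, ← inner_conj_symm]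
  have hpim : (⟪x, T₀ x⟫ : ℂ).im = 0 := by simpa using h2.symm
  have hconjp : (starRingEnd ℂ) ⟪x, T₀ x⟫ = ⟪x, T₀ x⟫ := Complex.conj_eq_iff_im.mpr hpim
  constructor
  · rw [hconj, hconjp]
    exact Complex.conj_eq_iff_re.mp hconjp
  · rw [hconj, hconjp]
    simpa using h1
end

section
/- If {e_n} is a sequence of unit vectors in H whose Kaczmarz auxiliary sequence {h_n} is Bessel with bound B ≤ 1, then ⟨h_0, h_n⟩ = 0 for all n ≥ 1. -/
open scoped ComplexInnerProductSpace
open Filter Topology Finset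

variable {H : Type*} [NormedAddCommGroup H] [InnerProductSpace ℂ H] [CompleteSpace H]

/-- if `e` is a sequence of unit vectors whose Kaczmarz auxiliary
sequence `h` is Bessel with bound `B ≤ 1`, then `⟨h_0, h_n⟩ = 0` for all `n ≥ 1`. -/
theorem aux_orthogonal_of_bessel
    (e h : ℕ → H) (B : ℝ)
    (hunit : ∀ n, ‖e n‖ = 1)
    (hh0 : h 0 = e 0)
    (hh : ∀ n, h (n + 1)
        = e (n + 1) - ∑ k ∈ Finset.range (n + 1), ⟪e k, e (n + 1)⟫ • h k)
    (hB : B ≤ 1)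
    (hbessel : ∀ (x : H) (N : ℕ),
      ∑ n ∈ Finset.range N, ‖⟪h n, x⟫‖ ^ 2 ≤ B * ‖x‖ ^ 2) :
    ∀ n, 1 ≤ n → ⟪h n, h 0⟫ = 0 := by
  intro n hn
  have hx : ‖h 0‖ = 1 := by rw [hh0]; exact hunit 0
  have hne : (0 : ℕ) ≠ n := by omega
  have hsub : ({0, n} : Finset ℕ) ⊆ Finset.range (n + 1) := by
    intro k hk
    simp only [Finset.mem_insert, Finset.mem_singleton] at hk
    rcases hk with rfl | rfl <;> simp [Nat.lt_succ_iff]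
  have hpair : ∑ k ∈ ({0, n} : Finset ℕ), ‖⟪h k, h 0⟫‖ ^ 2
      ≤ ∑ k ∈ Finset.range (n + 1), ‖⟪h k, h 0⟫‖ ^ 2 := by
    refine Finset.sum_le_sum_of_subset_of_nonneg hsub ?_
    intro k _ _; positivity
  rw [Finset.sum_pair hne] at hpair
  have h00 : ‖⟪h 0, h 0⟫‖ ^ 2 = 1 := by
    rw [inner_self_eq_norm_sq_to_K (𝕜 := ℂ)]
    simp [hx]
  have key := hbessel (h 0) (n + 1)
  rw [hx] at key
  have hB1 : B * 1 ^ 2 ≤ 1 := by nlinarith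
  have : ‖⟪h n, h 0⟫‖ ^ 2 ≤ 0 := by nlinarith
  have hz : ‖⟪h n, h 0⟫‖ = 0 := by nlinarith [norm_nonneg (⟪h n, h 0⟫)]
  exact norm_eq_zero.mp hz
end

section
/- Let {e_n} be a sequence in H with Kaczmarz auxiliary sequence {h_n}, and let {ψ_n} be any sequence in H. Define x_n by the classical Kaczmarz algorithm for x, and y_0 = ⟨x, e_0⟩ψ_0, y_n = y_{n-1} + ⟨x − x_{n-1}, e_n⟩ψ_n. Then y_n = Σ_{k=0}^n ⟨x, h_k⟩ψ_k for all n; in particular ⟨x − x_{n-1}, e_n⟩ = ⟨x, h_n⟩. -/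
open scoped ComplexInnerProductSpace
open Filter Topology Finset

variable {H : Type*} [NormedAddCommGroup H] [InnerProductSpace ℂ H] [CompleteSpace H]

/-- augmented dual Kaczmarz algorithm: with `x_n` the classical
Kaczmarz approximations of `x` from `e`, `h` the auxiliary sequence of `e`, and
`y_0 = ⟨x, e_0⟩ψ_0`, `y_n = y_{n-1} + ⟨x − x_{n-1}, e_n⟩ψ_n`, we have
`y_n = ∑_{k=0}^n ⟨x, h_k⟩ψ_k`; in particular `⟨x − x_{n-1}, e_n⟩ = ⟨x, h_n⟩`. -/
theorem augmented_dual_kaczmarz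
    (e ψ h X Y : ℕ → H) (x : H)
    (hh0 : h 0 = e 0)
    (hh : ∀ n, h (n + 1)
        = e (n + 1) - ∑ k ∈ Finset.range (n + 1), ⟪e k, e (n + 1)⟫ • h k)
    (hX0 : X 0 = ⟪e 0, x⟫ • e 0)
    (hX : ∀ n, X (n + 1) = X n + ⟪e (n + 1), x - X n⟫ • e (n + 1))
    (hY0 : Y 0 = ⟪e 0, x⟫ • ψ 0)
    (hY : ∀ n, Y (n + 1) = Y n + ⟪e (n + 1), x - X n⟫ • ψ (n + 1)) :
    (∀ n, Y n = ∑ k ∈ Finset.range (n + 1), ⟪h k, x⟫ • ψ k) ∧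
      ∀ n, ⟪e (n + 1), x - X n⟫ = ⟪h (n + 1), x⟫ := by
  have key : ∀ n, X n = ∑ k ∈ Finset.range (n + 1), ⟪h k, x⟫ • e k := by
    intro n
    induction n with
    | zero => simp [hX0, hh0]
    | succ n ih =>
      have inn : ⟪e (n + 1), x - X n⟫ = ⟪h (n + 1), x⟫ := by
        rw [hh n, inner_sub_left, inner_sub_right, ih, inner_sum, sum_inner]
        congr 1
        refine Finset.sum_congr rfl fun k _ => ?_
        rw [inner_smul_right, inner_smul_left, inner_conj_symm, mul_comm]
      rw [hX n, inn, ih]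
      exact (Finset.sum_range_succ _ (n+1)).symm
  have inn : ∀ n, ⟪e (n + 1), x - X n⟫ = ⟪h (n + 1), x⟫ := by
    intro n
    rw [key n, inner_sub_right, inner_sum, hh n, inner_sub_left, sum_inner]
    congr 1
    refine Finset.sum_congr rfl fun k _ => ?_
    rw [inner_smul_right, inner_smul_left, inner_conj_symm, mul_comm]
  refine ⟨fun n => ?_, inn⟩
  induction n with
  | zero => simp [hY0, hh0]
  | succ n ih =>
    rw [hY n, inn n, ih]
    exact (Finset.sum_range_succ _ (n+1)).symm
end
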